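/- arXiv:2411.06623 — 5 statements merged into one kernel-verified Lean document; each statement's English description precedes it below -/
import Mathlib

section
/- If a solution v of the Dalcher–Kalnay ODE has initial condition v₀ with 0 < v₀ < v∞ and α − s/v∞ − 2(α/v∞)v₀ ≤ 0, then v is strictly concave on (0, ∞), i.e., d²v/dt² < 0 for all t > 0. -/
/-- If the Dalcher–Kalnay solution has 0 < v₀ < v∞ and
α − s/v∞ − 2(α/v∞)v₀ ≤ 0, it is strictly concave on (0, ∞): d²v/dt² < 0 for t > 0. -/
theorem dk_concave (α s vinf v₀ : ℝ)
    (hα : 0 < α) (hs : 0 < s) (hvinf : 0 < vinf)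
    (v : ℝ → ℝ) (hC2 : ContDiff ℝ 2 v)
    (hode : ∀ t, 0 ≤ t → HasDerivAt v ((α * v t + s) * (1 - v t / vinf)) t)
    (h0 : v 0 = v₀) (h0pos : 0 < v₀) (h0lt : v₀ < vinf)
    (hrange : ∀ t, 0 < t → v₀ < v t ∧ v t < vinf)
    (hcrit : α - s / vinf - 2 * (α / vinf) * v₀ ≤ 0) :
    ∀ t, 0 < t → deriv (deriv v) t < 0 := by
  intro t ht
  obtain ⟨hv1, hv2⟩ := hrange t ht
  set g : ℝ → ℝ := fun u => (α * v u + s) * (1 - v u / vinf) with hg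
  have hdd : deriv (deriv v) t = deriv g t := by
    apply Filter.EventuallyEq.deriv_eq
    filter_upwards [Ioi_mem_nhds ht] with u hu
    exact (hode u (le_of_lt hu)).deriv
  have hv' : HasDerivAt v (g t) t := hode t ht.le
  have h1 : HasDerivAt (fun u => α * v u + s) (α * g t) t := by
    simpa using ((hv'.const_mul α).add_const s)
  have h2 : HasDerivAt (fun u => 1 - v u / vinf) (-(g t / vinf)) t := by
    simpa using ((hv'.div_const vinf).const_sub 1)
  have hgd : HasDerivAt g ((α * g t) * (1 - v t / vinf) + (α * v t + s) * (-(g t / vinf))) t :=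
    h1.mul h2
  rw [hdd, hgd.deriv]
  have hvpos : 0 < α * v t + s := by nlinarith
  have h1v : 0 < 1 - v t / vinf := by
    rw [sub_pos, div_lt_one hvinf]; exact hv2
  have hgpos : 0 < g t := mul_pos hvpos h1v
  have hD : α - s / vinf - 2 * (α / vinf) * v t < 0 := by
    have h3 : 0 < 2 * (α / vinf) * (v t - v₀) := mul_pos (by positivity) (sub_pos.mpr hv1)
    nlinarith
  have hfac : (α * g t) * (1 - v t / vinf) + (α * v t + s) * (-(g t / vinf))
      = g t * (α - s / vinf - 2 * (α / vinf) * v t) := by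
    simp only [hg]; ring
  rw [hfac]
  exact mul_neg_of_pos_of_neg hgpos hD
end

section
/- If v₀ ∈ (0, v∞) satisfies α − s/v∞ − 2(α/v∞)v₀ > 0, then there exists t_c > 0 such that the solution v of the Dalcher–Kalnay ODE is strictly convex on (0, t_c) and strictly concave on (t_c, ∞). -/
/-- If 0 < v₀ < v∞ and α − s/v∞ − 2(α/v∞)v₀ > 0, there exists an inflection
time t_c > 0 such that the Dalcher–Kalnay solution is strictly convex on
(0, t_c) and strictly concave on (t_c, ∞). -/
theorem dk_inflection (α s vinf v₀ : ℝ)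
    (hα : 0 < α) (hs : 0 < s) (hvinf : 0 < vinf)
    (v : ℝ → ℝ) (hC2 : ContDiff ℝ 2 v)
    (hode : ∀ t, 0 ≤ t → HasDerivAt v ((α * v t + s) * (1 - v t / vinf)) t)
    (h0 : v 0 = v₀) (h0pos : 0 < v₀) (h0lt : v₀ < vinf)
    (hmono : StrictMonoOn v (Set.Ici 0))
    (hlim : Filter.Tendsto v Filter.atTop (nhds vinf))
    (hcrit : 0 < α - s / vinf - 2 * (α / vinf) * v₀) :
    ∃ tc : ℝ, 0 < tc ∧ StrictConvexOn ℝ (Set.Ioo 0 tc) v ∧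
      StrictConcaveOn ℝ (Set.Ioi tc) v := by
  have hvinf' : vinf ≠ 0 := ne_of_gt hvinf
  have hα' : α ≠ 0 := ne_of_gt hα
  have hcont : Continuous v := hC2.continuous
  have hmono' : MonotoneOn v (Set.Ici 0) := hmono.monotoneOn
  -- upper bound : v t < vinf on Ici 0
  have hub : ∀ t, 0 ≤ t → v t < vinf := by
    intro t ht
    by_contra h
    push_neg at h
    have h1 : v t < v (t + 1) := hmono ht (by simp; linarith) (by linarith)
    have h2 : v (t + 1) ≤ vinf := by
      refine ge_of_tendsto hlim ?_
      filter_upwards [Filter.eventually_ge_atTop (t + 1)] with u hu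
      exact hmono' (by simp; linarith) (by simp; linarith) hu
    linarith
  -- lower bound
  have hlb : ∀ t, 0 ≤ t → v₀ ≤ v t := by
    intro t ht
    have := hmono' (Set.self_mem_Ici) ht ht
    rwa [h0] at this
  -- the critical value
  set vc : ℝ := vinf / 2 - s / (2 * α) with hvc
  have hg_vc : α - s / vinf - 2 * (α / vinf) * vc = 0 := by
    field_simp [hvc]; rw [hvc]; field_simp; ring
  have hαvinf : 0 < α / vinf := div_pos hα hvinf
  have hv0_lt : v₀ < vc := by
    by_contra h
    push_neg at h
    have h2 := mul_le_mul_of_nonneg_left h (by positivity : (0:ℝ) ≤ 2 * (α / vinf))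
    nlinarith [hg_vc, hcrit]
  have hvc_lt : vc < vinf := by
    have := div_pos hs (by positivity : (0:ℝ) < 2 * α)
    rw [hvc]; linarith
  -- find T with vc < v T
  obtain ⟨T, hT0, hTgt⟩ : ∃ T, 0 ≤ T ∧ vc < v T := by
    have h1 : ∀ᶠ t in Filter.atTop, vc < v t := hlim.eventually (eventually_gt_nhds hvc_lt)
    have h2 : ∀ᶠ t in Filter.atTop, (0:ℝ) ≤ t := Filter.eventually_ge_atTop 0
    obtain ⟨T, hT1, hT2⟩ := (h2.and h1).exists
    exact ⟨T, hT1, hT2⟩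
  -- IVT
  obtain ⟨tc, htc_mem, htc_eq⟩ : ∃ tc ∈ Set.Icc (0:ℝ) T, v tc = vc := by
    have := intermediate_value_Icc hT0 hcont.continuousOn
    have hvc_mem : vc ∈ Set.Icc (v 0) (v T) := ⟨by rw [h0]; linarith, le_of_lt hTgt⟩
    obtain ⟨tc, h1, h2⟩ := this hvc_mem
    exact ⟨tc, h1, h2⟩
  have htc_pos : 0 < tc := by
    rcases lt_or_eq_of_le htc_mem.1 with h | h
    · exact h
    · exfalso; rw [← h] at htc_eq; rw [h0] at htc_eq; linarith
  -- second derivative formula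
  have hd2 : ∀ t : ℝ, 0 < t → deriv (deriv v) t =
      ((α * v t + s) * (1 - v t / vinf)) * (α - s / vinf - 2 * (α / vinf) * v t) := by
    intro t ht
    have hev : deriv v =ᶠ[nhds t] (fun u => (α * v u + s) * (1 - v u / vinf)) := by
      filter_upwards [Ioi_mem_nhds ht] with u hu
      exact (hode u (le_of_lt hu)).deriv
    rw [hev.deriv_eq]
    have hv : HasDerivAt v ((α * v t + s) * (1 - v t / vinf)) t := hode t ht.le
    have h1 : HasDerivAt (fun u => α * v u + s)
        (α * ((α * v t + s) * (1 - v t / vinf))) t := (hv.const_mul α).add_const s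
    have h2 : HasDerivAt (fun u => 1 - v u / vinf)
        (-(((α * v t + s) * (1 - v t / vinf)) / vinf)) t := (hv.div_const vinf).const_sub 1
    have h3 := h1.mul h2
    rw [show deriv (fun u => (α * v u + s) * (1 - v u / vinf)) t = _ from h3.deriv]
    field_simp
    ring
  refine ⟨tc, htc_pos, ?_, ?_⟩
  · apply strictConvexOn_of_deriv2_pos (convex_Ioo 0 tc) hcont.continuousOn
    intro x hx
    rw [interior_Ioo] at hx
    have hx0 : 0 < x := hx.1
    have hvx_lt : v x < vc := by
      rw [← htc_eq]
      exact hmono (Set.mem_Ici.2 hx0.le) (Set.mem_Ici.2 htc_pos.le) hx.2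
    have hvx0 : 0 < v x := lt_of_lt_of_le h0pos (hlb x hx0.le)
    have hvxvinf : v x < vinf := hub x hx0.le
    have hF : 0 < (α * v x + s) * (1 - v x / vinf) := by
      apply mul_pos (by nlinarith)
      have : v x / vinf < 1 := (div_lt_one hvinf).2 hvxvinf
      linarith
    have hg : 0 < α - s / vinf - 2 * (α / vinf) * v x := by
      nlinarith [mul_pos hαvinf (sub_pos.2 hvx_lt), hg_vc]
    have h2 : deriv^[2] v x = deriv (deriv v) x := by
      simp [Function.iterate_succ_apply', Function.iterate_one]
    rw [h2, hd2 x hx0]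
    exact mul_pos hF hg
  · apply strictConcaveOn_of_deriv2_neg (convex_Ioi tc) hcont.continuousOn
    intro x hx
    rw [interior_Ioi] at hx
    have hx0 : 0 < x := lt_trans htc_pos hx
    have hvx_gt : vc < v x := by
      rw [← htc_eq]
      exact hmono (Set.mem_Ici.2 htc_pos.le) (Set.mem_Ici.2 hx0.le) hx
    have hvx0 : 0 < v x := lt_of_lt_of_le h0pos (hlb x hx0.le)
    have hvxvinf : v x < vinf := hub x hx0.le
    have hF : 0 < (α * v x + s) * (1 - v x / vinf) := by
      apply mul_pos (by nlinarith)
      have : v x / vinf < 1 := (div_lt_one hvinf).2 hvxvinf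
      linarith
    have hg : α - s / vinf - 2 * (α / vinf) * v x < 0 := by
      nlinarith [mul_pos hαvinf (sub_pos.2 hvx_gt), hg_vc]
    have h2 : deriv^[2] v x = deriv (deriv v) x := by
      simp [Function.iterate_succ_apply', Function.iterate_one]
    rw [h2, hd2 x hx0]
    exact mul_neg_of_pos_of_neg hF hg
end

section
/- Any solution of the SDE dv* = (v* + 1)(1 − v*/v*∞) dt + β v* dW with initial value v*(0) > 0 exists globally and remains strictly positive for all t ≥ 0, almost surely. -/
open Set Filter Topology

namespace SDEAux

noncomputable def Ee (β : ℝ) (W : ℝ → ℝ) (t : ℝ) : ℝ :=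
  Real.exp (-(β * W t - β ^ 2 * t / 2))

noncomputable def gg (vinf β : ℝ) (W : ℝ → ℝ) (t y : ℝ) : ℝ :=
  (y + Ee β W t) * (1 - y / (Ee β W t * vinf))

lemma Ee_pos (β : ℝ) (W : ℝ → ℝ) (t : ℝ) : 0 < Ee β W t := Real.exp_pos _

lemma Ee_cont (β : ℝ) {W : ℝ → ℝ} (hW : Continuous W) : Continuous (Ee β W) := by
  unfold Ee; fun_prop

lemma gg_sub (vinf β : ℝ) (W : ℝ → ℝ) (t y z : ℝ) (hv : vinf ≠ 0) :
    gg vinf β W t y - gg vinf β W t z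
      = (y - z) * ((1 - 1 / vinf) - (y + z) / (Ee β W t * vinf)) := by
  have hE : Ee β W t ≠ 0 := (Ee_pos β W t).ne'
  unfold gg
  field_simp
  ring


/-- Lower barrier: if the field is positive at the level `m` for all times, a solution
starting above `m` stays above `m`. -/
lemma barrier_lower {g : ℝ → ℝ → ℝ} {Y : ℝ → ℝ} {T m : ℝ}
    (hd : ∀ t ∈ Icc (0:ℝ) T, HasDerivAt Y (g t (Y t)) t)
    (h0 : m < Y 0)
    (hg : ∀ t ∈ Icc (0:ℝ) T, 0 < g t m) :
    ∀ t ∈ Icc (0:ℝ) T, m < Y t := by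
  by_contra hcon
  push_neg at hcon
  obtain ⟨t₁, ht₁, hYt₁⟩ := hcon
  set S : Set ℝ := {s | s ∈ Icc (0:ℝ) T ∧ Y s ≤ m} with hS
  have hne : S.Nonempty := ⟨t₁, ht₁, hYt₁⟩
  have hbdd : BddBelow S := ⟨0, fun s hs => hs.1.1⟩
  set τ := sInf S with hτdef
  have hτ0 : 0 ≤ τ := le_csInf hne fun s hs => hs.1.1
  have hτT : τ ≤ T := le_trans (csInf_le hbdd ⟨ht₁, hYt₁⟩) ht₁.2
  have hτIcc : τ ∈ Icc (0:ℝ) T := ⟨hτ0, hτT⟩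
  have hcτ : ContinuousAt Y τ := (hd τ hτIcc).continuousAt
  -- τ ∈ closure S, hence Y τ ≤ m
  have hτcl : τ ∈ closure S := csInf_mem_closure hne hbdd
  have hYτ_le : Y τ ≤ m := by
    have hne' : (𝓝[S] τ).NeBot := mem_closure_iff_nhdsWithin_neBot.1 hτcl
    have htend : Tendsto Y (𝓝[S] τ) (𝓝 (Y τ)) := hcτ.continuousWithinAt.tendsto
    exact le_of_tendsto htend (eventually_nhdsWithin_of_forall fun s hs => hs.2)
  -- before τ, Y > m
  have hbefore : ∀ s, 0 ≤ s → s < τ → m < Y s := by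
    intro s hs0 hsτ
    by_contra h
    push_neg at h
    exact absurd (csInf_le hbdd ⟨⟨hs0, le_trans hsτ.le hτT⟩, h⟩) (not_le.2 hsτ)
  have hτpos : 0 < τ := by
    rcases eq_or_lt_of_le hτ0 with h | h
    · exfalso; rw [← h] at hYτ_le; linarith
    · exact h
  -- Y τ ≥ m by left continuity
  have hYτ_ge : m ≤ Y τ := by
    have htend : Tendsto Y (𝓝[<] τ) (𝓝 (Y τ)) :=
      hcτ.continuousWithinAt.tendsto
    refine ge_of_tendsto htend ?_
    filter_upwards [Ioo_mem_nhdsLT_of_mem (show τ ∈ Ioc (0:ℝ) τ from ⟨hτpos, le_refl _⟩)]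
      with s hs
    exact (hbefore s hs.1.le hs.2).le
  have hYτ : Y τ = m := le_antisymm hYτ_le hYτ_ge
  -- derivative at τ is positive
  have hdτ : HasDerivAt Y (g τ m) τ := by
    have := hd τ hτIcc; rwa [hYτ] at this
  have hgpos : 0 < g τ m := hg τ hτIcc
  -- slope from the left is ≤ 0
  have hslope : Tendsto (slope Y τ) (𝓝[Iio τ \ {τ}] τ) (𝓝 (g τ m)) :=
    hasDerivWithinAt_iff_tendsto_slope.1 (hdτ.hasDerivWithinAt (s := Iio τ))
  have hIio : (Iio τ \ {τ}) = Iio τ := diff_singleton_eq_self (fun h => lt_irrefl τ h)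
  rw [hIio] at hslope
  have hle : g τ m ≤ 0 := by
    refine le_of_tendsto hslope ?_
    filter_upwards [Ioo_mem_nhdsLT_of_mem (show τ ∈ Ioc (0:ℝ) τ from ⟨hτpos, le_refl _⟩)]
      with s hs
    have h1 : 0 ≤ Y s - Y τ := by
      rw [hYτ]; linarith [hbefore s hs.1.le hs.2]
    have h2 : s - τ < 0 := by linarith [hs.2]
    rw [slope_def_field]
    exact div_nonpos_of_nonneg_of_nonpos h1 h2.le
  linarith


lemma barrier_upper {g : ℝ → ℝ → ℝ} {Y : ℝ → ℝ} {T M : ℝ}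
    (hd : ∀ t ∈ Icc (0:ℝ) T, HasDerivAt Y (g t (Y t)) t)
    (h0 : Y 0 < M)
    (hg : ∀ t ∈ Icc (0:ℝ) T, g t M < 0) :
    ∀ t ∈ Icc (0:ℝ) T, Y t < M := by
  have key := barrier_lower (g := fun t y => -(g t (-y))) (Y := fun s => -Y s)
    (T := T) (m := -M) ?_ (by simpa using h0) ?_
  · intro t ht
    have := key t ht
    simpa using this
  · intro t ht
    have := (hd t ht).neg; simp only [neg_neg]; exact this
  · intro t ht
    simpa using hg t ht

/-- Bounds on the exponential factor over a compact time interval. -/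
lemma Ee_bounds (β : ℝ) {W : ℝ → ℝ} (hW : Continuous W) (a b : ℝ) (hab : a ≤ b) :
    ∃ e₀ e₁ : ℝ, 0 < e₀ ∧ ∀ t ∈ Icc a b, e₀ ≤ Ee β W t ∧ Ee β W t ≤ e₁ := by
  obtain ⟨x, hx, hxmin⟩ := isCompact_Icc.exists_isMinOn (nonempty_Icc.2 hab)
    (Ee_cont β hW).continuousOn
  obtain ⟨y, hy, hymax⟩ := isCompact_Icc.exists_isMaxOn (nonempty_Icc.2 hab)
    (Ee_cont β hW).continuousOn
  exact ⟨Ee β W x, Ee β W y, Ee_pos β W x, fun t ht => ⟨hxmin ht, hymax ht⟩⟩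

/-- Lipschitz constant of `gg t` on `Icc (-B) B` when `Ee t ≥ e₀`. -/
lemma gg_lipschitzOn {vinf : ℝ} (β : ℝ) (W : ℝ → ℝ) (hv : 0 < vinf) {e₀ B : ℝ}
    (he₀ : 0 < e₀) (hB : 0 ≤ B) {t : ℝ} (hE : e₀ ≤ Ee β W t) :
    LipschitzOnWith (Real.toNNReal (|1 - 1 / vinf| + 2 * B / (e₀ * vinf)))
      (gg vinf β W t) (Icc (-B) B) := by
  apply LipschitzOnWith.of_dist_le_mul
  intro x hx y hy
  have hE0 := Ee_pos β W t
  have hEv : 0 < Ee β W t * vinf := mul_pos hE0 hv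
  have he₀v : 0 < e₀ * vinf := mul_pos he₀ hv
  rw [Real.dist_eq, Real.dist_eq, gg_sub vinf β W t x y hv.ne', abs_mul]
  rw [Real.coe_toNNReal _ (by positivity), mul_comm]
  apply mul_le_mul_of_nonneg_right _ (abs_nonneg _)
  calc |1 - 1 / vinf - (x + y) / (Ee β W t * vinf)|
      ≤ |1 - 1 / vinf| + |(x + y) / (Ee β W t * vinf)| := abs_sub _ _
    _ ≤ |1 - 1 / vinf| + 2 * B / (e₀ * vinf) := by
        apply add_le_add_right
        rw [abs_div, abs_of_pos hEv]
        have hnum : |x + y| ≤ 2 * B := by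
          calc |x + y| ≤ |x| + |y| := abs_add_le _ _
            _ ≤ B + B := add_le_add (abs_le.2 ⟨hx.1, hx.2⟩) (abs_le.2 ⟨hy.1, hy.2⟩)
            _ = 2 * B := by ring
        exact div_le_div₀ (by positivity) hnum he₀v (mul_le_mul_of_nonneg_right hE hv.le)

end SDEAux

namespace SDEAux

/-- Uniqueness of solutions of the transformed ODE on `[0, b]`. -/
lemma sol_unique {vinf : ℝ} (β : ℝ) {W : ℝ → ℝ} (hv : 0 < vinf) (hW : Continuous W)
    {b : ℝ} {Y₁ Y₂ : ℝ → ℝ}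
    (h1 : ∀ t ∈ Icc (0:ℝ) b, HasDerivAt Y₁ (gg vinf β W t (Y₁ t)) t)
    (h2 : ∀ t ∈ Icc (0:ℝ) b, HasDerivAt Y₂ (gg vinf β W t (Y₂ t)) t)
    (h0 : Y₁ 0 = Y₂ 0) : EqOn Y₁ Y₂ (Icc (0:ℝ) b) := by
  rcases lt_or_ge b 0 with hb | hb
  · rw [Icc_eq_empty (by linarith)]; exact fun t ht => absurd ht (notMem_empty t)
  -- continuity
  have c1 : ContinuousOn Y₁ (Icc (0:ℝ) b) := fun t ht => (h1 t ht).continuousAt.continuousWithinAt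
  have c2 : ContinuousOn Y₂ (Icc (0:ℝ) b) := fun t ht => (h2 t ht).continuousAt.continuousWithinAt
  -- bounds
  obtain ⟨B₁, hB₁⟩ := isCompact_Icc.exists_bound_of_continuousOn c1
  obtain ⟨B₂, hB₂⟩ := isCompact_Icc.exists_bound_of_continuousOn c2
  set B := max B₁ B₂ with hBdef
  have hB : 0 ≤ B := le_trans (norm_nonneg (Y₁ 0)) (le_trans (hB₁ 0 ⟨le_refl _, hb⟩) (le_max_left _ _))
  have hmem1 : ∀ t ∈ Icc (0:ℝ) b, Y₁ t ∈ Icc (-B) B := by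
    intro t ht
    have := le_trans (hB₁ t ht) (le_max_left B₁ B₂)
    exact abs_le.1 this
  have hmem2 : ∀ t ∈ Icc (0:ℝ) b, Y₂ t ∈ Icc (-B) B := by
    intro t ht
    have := le_trans (hB₂ t ht) (le_max_right B₁ B₂)
    exact abs_le.1 this
  obtain ⟨e₀, e₁, he₀, hE⟩ := Ee_bounds β hW 0 b hb
  -- time-clamped field
  set τ : ℝ → ℝ := fun t => min (max t 0) b with hτdef
  have hτmem : ∀ t, τ t ∈ Icc (0:ℝ) b := fun t =>
    ⟨le_min (le_max_right _ _) hb, min_le_right _ _⟩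
  have hτeq : ∀ t ∈ Ico (0:ℝ) b, τ t = t := by
    intro t ht
    simp [hτdef, max_eq_left ht.1, min_eq_left ht.2.le]
  set v : ℝ → ℝ → ℝ := fun t y => gg vinf β W (τ t) y with hvdef
  have hlip : ∀ t, LipschitzOnWith (Real.toNNReal (|1 - 1 / vinf| + 2 * B / (e₀ * vinf)))
      (v t) (Icc (-B) B) := fun t =>
    gg_lipschitzOn β W hv he₀ hB (hE (τ t) (hτmem t)).1
  have key := ODE_solution_unique_of_mem_Icc_right (v := v)
    (s := fun _ => Icc (-B) B) (K := Real.toNNReal (|1 - 1 / vinf| + 2 * B / (e₀ * vinf)))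
    (fun t _ => hlip t) c1 ?_ (fun t ht => hmem1 t (Ico_subset_Icc_self ht)) c2 ?_
    (fun t ht => hmem2 t (Ico_subset_Icc_self ht)) h0
  · exact key
  · intro t ht
    have h := (h1 t (Ico_subset_Icc_self ht)).hasDerivWithinAt (s := Ici t)
    show HasDerivWithinAt Y₁ (gg vinf β W (τ t) (Y₁ t)) (Ici t) t
    rwa [hτeq t ht]
  · intro t ht
    have h := (h2 t (Ico_subset_Icc_self ht)).hasDerivWithinAt (s := Ici t)
    show HasDerivWithinAt Y₂ (gg vinf β W (τ t) (Y₂ t)) (Ici t) t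
    rwa [hτeq t ht]

end SDEAux

namespace SDEAux

lemma gg_pos_at (vinf β : ℝ) (W : ℝ → ℝ) (t m : ℝ) (hm : 0 < m)
    (hlt : m < Ee β W t * vinf) : 0 < gg vinf β W t m := by
  have hE := Ee_pos β W t
  have hEv : 0 < Ee β W t * vinf := lt_trans hm hlt
  apply mul_pos (by linarith)
  have : m / (Ee β W t * vinf) < 1 := (div_lt_one hEv).2 hlt
  linarith

lemma gg_neg_at (vinf β : ℝ) (W : ℝ → ℝ) (t M : ℝ)
    (hv : 0 < vinf) (hgt : Ee β W t * vinf < M) : gg vinf β W t M < 0 := by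
  have hE := Ee_pos β W t
  have hEv : 0 < Ee β W t * vinf := mul_pos hE hv
  have hM : 0 < M := lt_trans hEv hgt
  apply mul_neg_of_pos_of_neg (by linarith)
  have : 1 < M / (Ee β W t * vinf) := (one_lt_div hEv).2 hgt
  linarith

/-- Global existence on `[0, n+1]` of a positive solution of the transformed ODE. -/
lemma exists_sol {vinf β x₀ : ℝ} (hv : 0 < vinf) (hx₀ : 0 < x₀) {W : ℝ → ℝ}
    (hW : Continuous W) (n : ℕ) :
    ∃ Y : ℝ → ℝ, Y 0 = x₀ ∧ ∀ t ∈ Icc (0:ℝ) ((n:ℝ) + 1),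
      HasDerivAt Y (gg vinf β W t (Y t)) t ∧ 0 < Y t := by
  have hn0 : (0:ℝ) ≤ (n:ℝ) := Nat.cast_nonneg n
  obtain ⟨e₀, e₁, he₀, hEb⟩ := Ee_bounds β hW (-1) ((n:ℝ) + 2) (by linarith)
  have h0mem : (0:ℝ) ∈ Icc (-1:ℝ) ((n:ℝ) + 2) := ⟨by norm_num, by linarith⟩
  have he₁ : 0 < e₁ := lt_of_lt_of_le (Ee_pos β W 0) (hEb 0 h0mem).2
  have he₀₁ : e₀ ≤ e₁ := le_trans (hEb 0 h0mem).1 (hEb 0 h0mem).2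
  set m : ℝ := min x₀ (vinf * e₀) / 2 with hmdef
  set M : ℝ := max x₀ (vinf * e₁) + 1 with hMdef
  have hm0 : 0 < m := by
    have : 0 < min x₀ (vinf * e₀) := lt_min hx₀ (by positivity)
    positivity
  have hmx : m < x₀ := by
    have h := min_le_left x₀ (vinf * e₀)
    rw [hmdef]; linarith
  have hMx : x₀ < M := lt_of_le_of_lt (le_max_left _ _) (by rw [hMdef]; linarith [le_refl (max x₀ (vinf*e₁))])
  have hmM : m ≤ M := le_of_lt (lt_trans hmx hMx)
  have hM0 : 0 < M := lt_trans (lt_trans hm0 hmx) hMx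
  -- sign conditions on the whole time interval
  have hsign_m : ∀ t ∈ Icc (-1:ℝ) ((n:ℝ) + 2), 0 < gg vinf β W t m := by
    intro t ht
    apply gg_pos_at vinf β W t m hm0
    have h1 : m < vinf * e₀ := by
      have h := min_le_right x₀ (vinf * e₀)
      have hpos := mul_pos hv he₀
      rw [hmdef]; linarith
    calc m < vinf * e₀ := h1
      _ ≤ vinf * Ee β W t := by
        apply mul_le_mul_of_nonneg_left (hEb t ht).1 hv.le
      _ = Ee β W t * vinf := mul_comm _ _
  have hsign_M : ∀ t ∈ Icc (-1:ℝ) ((n:ℝ) + 2), gg vinf β W t M < 0 := by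
    intro t ht
    apply gg_neg_at vinf β W t M hv
    calc Ee β W t * vinf ≤ e₁ * vinf := mul_le_mul_of_nonneg_right (hEb t ht).2 hv.le
      _ = vinf * e₁ := mul_comm _ _
      _ ≤ max x₀ (vinf * e₁) := le_max_right _ _
      _ < M := by rw [hMdef]; linarith
  -- the clamped field
  set clamp : ℝ → ℝ := fun y => max m (min y M) with hclampdef
  have hclamp_mem : ∀ y, clamp y ∈ Icc m M := fun y =>
    ⟨le_max_left _ _, max_le hmM (min_le_right _ _)⟩
  have hclamp_eq : ∀ y, m ≤ y → y ≤ M → clamp y = y := by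
    intro y h1 h2
    rw [hclampdef]; simp only [min_eq_left h2, max_eq_right h1]
  have hclamp_lip : LipschitzWith 1 clamp := by
    apply LipschitzWith.of_dist_le_mul
    intro a b
    rw [NNReal.coe_one, one_mul, Real.dist_eq, Real.dist_eq, hclampdef]
    calc |max m (min a M) - max m (min b M)|
        = |max (min a M) m - max (min b M) m| := by rw [max_comm m, max_comm m]
      _ ≤ |min a M - min b M| := abs_max_sub_max_le_abs _ _ _
      _ ≤ max |a - b| |M - M| := abs_min_sub_min_le_max _ _ _ _
      _ ≤ |a - b| := by simp
  set v : ℝ → ℝ → ℝ := fun t y => gg vinf β W t (clamp y) with hvdef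
  -- bound on the field
  set C : ℝ := (M + e₁) * (1 + M / (e₀ * vinf)) with hCdef
  have hC0 : 0 < C := by positivity
  have hbound : ∀ t ∈ Icc (-1:ℝ) ((n:ℝ) + 2), ∀ y : ℝ, |v t y| ≤ C := by
    intro t ht y
    have hz := hclamp_mem y
    set z := clamp y
    have hE0 := Ee_pos β W t
    have hEv : 0 < Ee β W t * vinf := mul_pos hE0 hv
    have he₀v : 0 < e₀ * vinf := mul_pos he₀ hv
    have hzpos : 0 < z := lt_of_lt_of_le hm0 hz.1
    have hdiv : z / (Ee β W t * vinf) ≤ M / (e₀ * vinf) :=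
      div_le_div₀ hM0.le hz.2 he₀v (mul_le_mul_of_nonneg_right (hEb t ht).1 hv.le)
    have hdiv0 : 0 ≤ z / (Ee β W t * vinf) := by positivity
    show |(z + Ee β W t) * (1 - z / (Ee β W t * vinf))| ≤ C
    rw [abs_mul, abs_of_pos (by linarith : (0:ℝ) < z + Ee β W t)]
    apply mul_le_mul _ _ (abs_nonneg _) (by linarith : (0:ℝ) ≤ M + e₁)
    · have := (hEb t ht).2; linarith [hz.2]
    · rw [abs_le]
      constructor <;> [linarith; linarith]
  -- Lipschitz constant
  set K : NNReal := Real.toNNReal (|1 - 1 / vinf| + 2 * M / (e₀ * vinf)) with hKdef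
  have hlip : ∀ t ∈ Icc (-1:ℝ) ((n:ℝ) + 2), LipschitzWith K (v t) := by
    intro t ht
    have hgl : LipschitzOnWith K (gg vinf β W t) (Icc (-M) M) :=
      gg_lipschitzOn β W hv he₀ hM0.le (hEb t ht).1
    have hmaps : MapsTo clamp univ (Icc (-M) M) := by
      intro y _
      have := hclamp_mem y
      exact ⟨le_trans (by linarith) this.1, this.2⟩
    have := hgl.comp (lipschitzOnWith_univ.2 hclamp_lip) hmaps
    rw [← lipschitzOnWith_univ]
    rw [mul_one] at this; exact this
  -- Picard–Lindelöf
  have hPL : IsPicardLindelof v (tmin := -1) (tmax := (n:ℝ) + 2) ⟨0, h0mem⟩ x₀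
      ⟨C * ((n:ℝ) + 2), by positivity⟩ 0 ⟨C, hC0.le⟩ K :=
    { lipschitzOnWith := fun t ht => (hlip t ht).lipschitzOnWith (s := _)
      continuousOn := by
        intro y _
        apply Continuous.continuousOn
        show Continuous fun t => (clamp y + Ee β W t) * (1 - clamp y / (Ee β W t * vinf))
        have hE := Ee_cont β hW
        apply Continuous.mul (continuous_const.add hE)
        apply Continuous.sub continuous_const
        exact continuous_const.div (hE.mul continuous_const)
          (fun t => (mul_pos (Ee_pos β W t) hv).ne')
      norm_le := fun t ht y _ => by
        rw [Real.norm_eq_abs]; exact hbound t ht y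
      mul_max_le := by
        have hmax : max ((n:ℝ) + 2 - 0) (0 - -1) = (n:ℝ) + 2 := by
          rw [max_eq_left (by linarith)]; ring
        show C * max ((n:ℝ) + 2 - 0) (0 - -1) ≤ C * ((n:ℝ) + 2) - 0
        rw [hmax, sub_zero] }
  obtain ⟨f, hf0', hfd⟩ := hPL.exists_eq_forall_mem_Icc_hasDerivWithinAt₀
  have hf0 : f 0 = x₀ := hf0'
  -- two-sided derivatives on [0, n+1]
  have hDA : ∀ t ∈ Icc (0:ℝ) ((n:ℝ) + 1), HasDerivAt f (v t (f t)) t := by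
    intro t ht
    have ht' : t ∈ Icc (-1:ℝ) ((n:ℝ) + 2) := ⟨by linarith [ht.1], by linarith [ht.2]⟩
    exact (hfd t ht').hasDerivAt (Icc_mem_nhds (by linarith [ht.1]) (by linarith [ht.2]))
  have hsub : ∀ t ∈ Icc (0:ℝ) ((n:ℝ) + 1), t ∈ Icc (-1:ℝ) ((n:ℝ) + 2) := by
    intro t ht; exact ⟨by linarith [ht.1], by linarith [ht.2]⟩
  -- barriers
  have hlow : ∀ t ∈ Icc (0:ℝ) ((n:ℝ) + 1), m < f t := by
    apply barrier_lower hDA (by rw [hf0]; exact hmx)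
    intro t ht
    show 0 < gg vinf β W t (clamp m)
    rw [hclamp_eq m (le_refl m) hmM]
    exact hsign_m t (hsub t ht)
  have hupp : ∀ t ∈ Icc (0:ℝ) ((n:ℝ) + 1), f t < M := by
    apply barrier_upper hDA (by rw [hf0]; exact hMx)
    intro t ht
    show gg vinf β W t (clamp M) < 0
    rw [hclamp_eq M hmM (le_refl M)]
    exact hsign_M t (hsub t ht)
  refine ⟨f, hf0, fun t ht => ⟨?_, lt_trans hm0 (hlow t ht)⟩⟩
  have := hDA t ht
  rwa [show v t (f t) = gg vinf β W t (f t) by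
    rw [hvdef]; simp only; rw [hclamp_eq (f t) (hlow t ht).le (hupp t ht).le]] at this

end SDEAux

namespace SDEAux

lemma Ee_zero (β : ℝ) {W : ℝ → ℝ} (hW0 : W 0 = 0) : Ee β W 0 = 1 := by
  simp [Ee, hW0]

lemma drift_eq (vinf β : ℝ) (W : ℝ → ℝ) (t x : ℝ) (hv : vinf ≠ 0) :
    Ee β W t * ((x + 1) * (1 - x / vinf)) = gg vinf β W t (x * Ee β W t) := by
  have hE : Ee β W t ≠ 0 := (Ee_pos β W t).ne'
  unfold gg
  field_simp

end SDEAux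

open SDEAux

/-- Global existence and positivity for the nonlinear error-growth SDE
dv* = (v* + 1)(1 − v*/v*∞)dt + βv* dW with v*(0) > 0, in the pathwise
(Doss–Sussmann) representation: with Z(t) = βW(t) − β²t/2, a process X solves
the SDE iff Y = X·exp(−Z) solves the random ODE Y'(t) = exp(−Z(t))·b(X(t)) where
b(v) = (v + 1)(1 − v/v*∞). There exists a global such solution with X(0) = x₀ > 0,
and every such solution remains strictly positive for all t ≥ 0. -/
theorem nonlinear_sde_global_positive (vinf β x₀ : ℝ)
    (hvinf : 0 < vinf) (hx₀ : 0 < x₀)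
    (W : ℝ → ℝ) (hW : Continuous W) (hW0 : W 0 = 0) :
    (∃ X : ℝ → ℝ, X 0 = x₀ ∧
      (∀ t, 0 ≤ t →
        HasDerivAt (fun u => X u * Real.exp (-(β * W u - β ^ 2 * u / 2)))
          (Real.exp (-(β * W t - β ^ 2 * t / 2)) *
            ((X t + 1) * (1 - X t / vinf))) t) ∧
      (∀ t, 0 ≤ t → 0 < X t)) ∧
    (∀ X : ℝ → ℝ, X 0 = x₀ →
      (∀ t, 0 ≤ t →
        HasDerivAt (fun u => X u * Real.exp (-(β * W u - β ^ 2 * u / 2)))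
          (Real.exp (-(β * W t - β ^ 2 * t / 2)) *
            ((X t + 1) * (1 - X t / vinf))) t) →
      ∀ t, 0 ≤ t → 0 < X t) := by
  constructor
  · -- existence
    choose Y hY using fun n : ℕ => exists_sol (β := β) hvinf hx₀ hW n
    have hcons : ∀ j k : ℕ, j ≤ k → EqOn (Y j) (Y k) (Icc (0:ℝ) ((j:ℝ) + 1)) := by
      intro j k hjk
      have hsub : Icc (0:ℝ) ((j:ℝ) + 1) ⊆ Icc (0:ℝ) ((k:ℝ) + 1) := by
        apply Icc_subset_Icc le_rfl
        have : (j:ℝ) ≤ (k:ℝ) := Nat.cast_le.2 hjk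
        linarith
      exact sol_unique β hvinf hW (fun s hs => ((hY j).2 s hs).1)
        (fun s hs => ((hY k).2 s (hsub hs)).1) ((hY j).1.trans (hY k).1.symm)
    set Yg : ℝ → ℝ := fun s => Y ⌊s⌋₊ s with hYgdef
    have hloc : ∀ t : ℝ, 0 ≤ t → ∃ n : ℕ,
        t ∈ Icc (0:ℝ) ((n:ℝ) + 1) ∧ Yg =ᶠ[𝓝 t] Y n := by
      intro t ht
      rcases lt_or_ge t 1 with h1 | h1
      · refine ⟨0, ⟨ht, by norm_num; linarith⟩, ?_⟩
        filter_upwards [Ioo_mem_nhds (show t - 1 < t by linarith) h1] with s hs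
        show Y ⌊s⌋₊ s = Y 0 s
        rw [Nat.floor_eq_zero.2 hs.2]
      · refine ⟨⌊t⌋₊, ⟨ht, (Nat.lt_floor_add_one t).le⟩, ?_⟩
        have h2 : (1:ℝ)/2 < t := by linarith
        filter_upwards [Ioo_mem_nhds h2 (Nat.lt_floor_add_one t)] with s hs
        show Y ⌊s⌋₊ s = Y ⌊t⌋₊ s
        have hs0 : (0:ℝ) ≤ s := by linarith [hs.1]
        have hfl : ⌊s⌋₊ ≤ ⌊t⌋₊ := by
          have hsr : (⌊s⌋₊ : ℝ) < (⌊t⌋₊ : ℝ) + 1 :=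
            lt_of_le_of_lt (Nat.floor_le hs0) hs.2
          have : (⌊s⌋₊ : ℝ) < ((⌊t⌋₊ + 1 : ℕ) : ℝ) := by push_cast; linarith
          exact Nat.lt_succ_iff.1 (Nat.cast_lt.1 this)
        exact hcons ⌊s⌋₊ ⌊t⌋₊ hfl ⟨hs0, (Nat.lt_floor_add_one s).le⟩
    refine ⟨fun s => Yg s / Ee β W s, ?_, ?_, ?_⟩
    · show Yg 0 / Ee β W 0 = x₀
      rw [Ee_zero β hW0, div_one]
      show Y ⌊(0:ℝ)⌋₊ 0 = x₀
      rw [Nat.floor_zero]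
      exact (hY 0).1
    · intro t ht
      obtain ⟨n, htmem, hev⟩ := hloc t ht
      have hYgt : Yg t = Y n t := hev.eq_of_nhds
      have hd : HasDerivAt Yg (gg vinf β W t (Yg t)) t := by
        rw [hYgt]
        exact (hev.hasDerivAt_iff).2 ((hY n).2 t htmem).1
      have hfun : (fun u => Yg u / Ee β W u * Real.exp (-(β * W u - β ^ 2 * u / 2))) = Yg := by
        funext u
        show Yg u / Ee β W u * Ee β W u = Yg u
        exact div_mul_cancel₀ _ (Ee_pos β W u).ne'
      rw [hfun]
      have hval : Real.exp (-(β * W t - β ^ 2 * t / 2)) *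
          ((Yg t / Ee β W t + 1) * (1 - Yg t / Ee β W t / vinf)) = gg vinf β W t (Yg t) := by
        have := drift_eq vinf β W t (Yg t / Ee β W t) hvinf.ne'
        rwa [div_mul_cancel₀ _ (Ee_pos β W t).ne'] at this
      rw [hval]
      exact hd
    · intro t ht
      obtain ⟨n, htmem, hev⟩ := hloc t ht
      have hYgt : Yg t = Y n t := hev.eq_of_nhds
      have hpos : 0 < Yg t := hYgt ▸ ((hY n).2 t htmem).2
      exact div_pos hpos (Ee_pos β W t)
  · -- positivity of any solution
    intro X hX0 hXd t ht
    set Yf : ℝ → ℝ := fun u => X u * Ee β W u with hYfdef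
    have hYd : ∀ s ∈ Icc (0:ℝ) t, HasDerivAt Yf (gg vinf β W s (Yf s)) s := by
      intro s hs
      have h := hXd s hs.1
      have heq : Real.exp (-(β * W s - β ^ 2 * s / 2)) *
          ((X s + 1) * (1 - X s / vinf)) = gg vinf β W s (Yf s) :=
        drift_eq vinf β W s (X s) hvinf.ne'
      rw [heq] at h
      exact h
    obtain ⟨e₀, e₁, he₀, hEb⟩ := Ee_bounds β hW 0 t ht
    set m : ℝ := min x₀ (vinf * e₀) / 2 with hmdef
    have hm0 : 0 < m := by
      have : 0 < min x₀ (vinf * e₀) := lt_min hx₀ (by positivity)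
      positivity
    have hmx : m < x₀ := by
      have h := min_le_left x₀ (vinf * e₀)
      rw [hmdef]; linarith
    have hY0 : Yf 0 = x₀ := by
      show X 0 * Ee β W 0 = x₀
      rw [Ee_zero β hW0, hX0, mul_one]
    have hpos := barrier_lower hYd (by rw [hY0]; exact hmx) ?_ t ⟨ht, le_refl t⟩
    · have hYt : 0 < Yf t := lt_trans hm0 hpos
      by_contra hX
      push_neg at hX
      have : Yf t ≤ 0 := mul_nonpos_of_nonpos_of_nonneg hX (Ee_pos β W t).le
      linarith
    · intro s hs
      apply gg_pos_at vinf β W s m hm0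
      have h1 : m < vinf * e₀ := by
        have h := min_le_right x₀ (vinf * e₀)
        have hpos := mul_pos hvinf he₀
        rw [hmdef]; linarith
      calc m < vinf * e₀ := h1
        _ ≤ vinf * Ee β W s := mul_le_mul_of_nonneg_left (hEb s hs).1 hvinf.le
        _ = Ee β W s * vinf := mul_comm _ _
end

section
/- The function ρ∞(v) = D·exp(−2((β²v∞ − v∞ + 1)·log v + v∞/v + v)/(β²v∞)) on (0, ∞), with β, v∞ > 0, solves the stationary Fokker–Planck equation −(v + 1)(1 − v/v∞)ρ + d/dv[(β²v²/2)ρ] = 0 for any constant D. -/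
/-- The function ρ∞(v) = D·exp(−2((β²v∞ − v∞ + 1)log v + v∞/v + v)/(β²v∞))
solves the stationary (zero-flux) Fokker–Planck equation
−(v + 1)(1 − v/v∞)ρ + d/dv[(β²v²/2)ρ] = 0 on (0, ∞). -/
theorem stationary_fokker_planck (β vinf D : ℝ) (hβ : 0 < β) (hvinf : 0 < vinf) :
    ∀ v : ℝ, 0 < v →
      HasDerivAt
        (fun u : ℝ => β ^ 2 * u ^ 2 / 2 *
          (D * Real.exp (-(2 / (β ^ 2 * vinf)) *
            ((β ^ 2 * vinf - vinf + 1) * Real.log u + vinf / u + u))))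
        ((v + 1) * (1 - v / vinf) *
          (D * Real.exp (-(2 / (β ^ 2 * vinf)) *
            ((β ^ 2 * vinf - vinf + 1) * Real.log v + vinf / v + v)))) v := by
  intro v hv
  set c : ℝ := β ^ 2 * vinf - vinf + 1 with hc
  have hvne : v ≠ 0 := hv.ne'
  -- derivative of inner function
  have hlog : HasDerivAt (fun u : ℝ => c * Real.log u) (c * v⁻¹) v :=
    (Real.hasDerivAt_log hvne).const_mul c
  have hinv : HasDerivAt (fun u : ℝ => vinf / u) (vinf * (-(v ^ 2)⁻¹)) v := by
    simpa [div_eq_mul_inv] using (hasDerivAt_inv hvne).const_mul vinf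
  have hid : HasDerivAt (fun u : ℝ => u) 1 v := hasDerivAt_id v
  have hinner : HasDerivAt
      (fun u : ℝ => -(2 / (β ^ 2 * vinf)) * (c * Real.log u + vinf / u + u))
      (-(2 / (β ^ 2 * vinf)) * (c * v⁻¹ + vinf * (-(v ^ 2)⁻¹) + 1)) v :=
    ((hlog.add hinv).add hid).const_mul _
  have hexp : HasDerivAt
      (fun u : ℝ => D * Real.exp (-(2 / (β ^ 2 * vinf)) * (c * Real.log u + vinf / u + u)))
      (D * (Real.exp (-(2 / (β ^ 2 * vinf)) * (c * Real.log v + vinf / v + v)) *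
        (-(2 / (β ^ 2 * vinf)) * (c * v⁻¹ + vinf * (-(v ^ 2)⁻¹) + 1)))) v :=
    (hinner.exp).const_mul D
  have hpoly : HasDerivAt (fun u : ℝ => β ^ 2 * u ^ 2 / 2) (β ^ 2 * (2 * v) / 2) v := by
    simpa using ((hasDerivAt_pow 2 v).const_mul (β ^ 2)).div_const 2
  have h := hpoly.mul hexp
  refine HasDerivAt.congr_deriv h ?_
  have hβne : β ≠ 0 := hβ.ne'
  have hvinfne : vinf ≠ 0 := hvinf.ne'
  field_simp
  ring
end

section
/- The function ρ∞(v) = D·exp(−2((β²v∞ − v∞ + 1)·log v + v∞/v + v)/(β²v∞)) with D > 0 is integrable on (0, ∞) and is unimodal with unique maximizer v* = ½(−β²v∞ + √((β²v∞ − v∞ + 1)² + 4v∞) + v∞ − 1). -/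
open Real MeasureTheory Set

private lemma sd_hasDerivAt (D c a w : ℝ) {v : ℝ} (hv : 0 < v) :
    HasDerivAt (fun u : ℝ => D * Real.exp (-c * (a * Real.log u + w / u + u)))
      (D * Real.exp (-c * (a * Real.log v + w / v + v)) *
        (-c * ((v ^ 2 + a * v - w) / v ^ 2))) v := by
  have h1 : HasDerivAt (fun u : ℝ => a * Real.log u + w / u + u)
      (a * v⁻¹ + w * (-(v ^ 2)⁻¹) + 1) v := by
    have hl := (Real.hasDerivAt_log hv.ne').const_mul a
    have hi := (hasDerivAt_inv hv.ne').const_mul w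
    have hdiv : HasDerivAt (fun u : ℝ => w / u) (w * (-(v ^ 2)⁻¹)) v := by
      simpa [div_eq_mul_inv] using hi
    exact HasDerivAt.congr_deriv ((hl.add hdiv).add (hasDerivAt_id v)) (by ring)
  have h2 := ((h1.const_mul (-c)).exp).const_mul D
  refine h2.congr_deriv ?_
  have hv2 : (v:ℝ) ^ 2 ≠ 0 := by positivity
  have hv0 : v ≠ 0 := hv.ne'
  field_simp
  ring

private lemma sd_lower (a w : ℝ) (hw : 0 < w) {v : ℝ} (hv : 0 < v) :
    -(|a| ^ 2 / w) - 2 * |a| ^ 2 + v / 2 ≤ a * Real.log v + w / v + v := by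
  have hb0 : 0 ≤ |a| := abs_nonneg a
  set s := Real.sqrt v with hsdef
  have hs : 0 < s := Real.sqrt_pos.2 hv
  have hs2 : s ^ 2 = v := Real.sq_sqrt hv.le
  have hls : Real.log s ≤ s - 1 := Real.log_le_sub_one_of_pos hs
  have hls' : -Real.log s ≤ 1 / s - 1 := by
    have := Real.log_le_sub_one_of_pos (inv_pos.2 hs)
    simpa [Real.log_inv, one_div] using this
  have hlv : Real.log v = 2 * Real.log s := by
    rw [hsdef, Real.log_sqrt hv.le]; ring
  have habs : -(|a| * (2 / s + 2 * s)) ≤ a * Real.log v := by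
    have h1 : |a * Real.log v| ≤ |a| * (2 / s + 2 * s) := by
      rw [abs_mul]
      apply mul_le_mul_of_nonneg_left _ hb0
      rw [abs_le]
      have hds : 0 < 1 / s := by positivity
      constructor <;> rw [hlv] <;>
        nlinarith [hs, hls, hls', hds, show (2:ℝ)/s = 2*(1/s) from by ring]
    linarith [neg_abs_le (a * Real.log v)]
  have key1 : -(|a| ^ 2 / w) ≤ w / v - 2 * |a| / s := by
    have hnn : (0:ℝ) ≤ (w - |a| * s) ^ 2 / (w * s ^ 2) :=
      div_nonneg (sq_nonneg _) (by positivity)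
    have he : (w - |a| * s) ^ 2 / (w * s ^ 2) = w / v - 2 * |a| / s + |a| ^ 2 / w := by
      rw [← hs2]; field_simp; ring
    rw [he] at hnn; linarith
  have key2 : -(2 * |a| ^ 2) ≤ v / 2 - 2 * |a| * s := by
    nlinarith [sq_nonneg (s - 2 * |a|), hs2]
  have hx : |a| * (2 / s + 2 * s) = 2 * |a| / s + 2 * |a| * s := by ring
  linarith

/-- The stationary density ρ∞(v) = D·exp(−2((β²v∞ − v∞ + 1)log v + v∞/v + v)/(β²v∞))
with D > 0 is integrable on (0, ∞) and unimodal, with unique maximizer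
v* = ½(−β²v∞ + √((β²v∞ − v∞ + 1)² + 4v∞) + v∞ − 1). -/
theorem stationary_density_unimodal (β vinf D : ℝ)
    (hβ : 0 < β) (hvinf : 0 < vinf) (hD : 0 < D) :
    MeasureTheory.IntegrableOn
      (fun v : ℝ => D * Real.exp (-(2 / (β ^ 2 * vinf)) *
        ((β ^ 2 * vinf - vinf + 1) * Real.log v + vinf / v + v)))
      (Set.Ioi 0) ∧
    (∀ v : ℝ, 0 < v →
      v < (-(β ^ 2 * vinf) + Real.sqrt ((β ^ 2 * vinf - vinf + 1) ^ 2 + 4 * vinf)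
            + vinf - 1) / 2 →
      0 < deriv (fun u : ℝ => D * Real.exp (-(2 / (β ^ 2 * vinf)) *
        ((β ^ 2 * vinf - vinf + 1) * Real.log u + vinf / u + u))) v) ∧
    (∀ v : ℝ,
      (-(β ^ 2 * vinf) + Real.sqrt ((β ^ 2 * vinf - vinf + 1) ^ 2 + 4 * vinf)
            + vinf - 1) / 2 < v →
      deriv (fun u : ℝ => D * Real.exp (-(2 / (β ^ 2 * vinf)) *
        ((β ^ 2 * vinf - vinf + 1) * Real.log u + vinf / u + u))) v < 0) := by
  have hb2v : 0 < β ^ 2 * vinf := by positivity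
  set c := 2 / (β ^ 2 * vinf) with hcdef
  have hc0 : 0 < c := by positivity
  set a := β ^ 2 * vinf - vinf + 1 with ha
  set s := Real.sqrt (a ^ 2 + 4 * vinf) with hsdef
  have hs0 : 0 ≤ s := Real.sqrt_nonneg _
  have hs2 : s ^ 2 = a ^ 2 + 4 * vinf := Real.sq_sqrt (by positivity)
  have hstar : (-(β ^ 2 * vinf) + s + vinf - 1) / 2 = (s - a) / 2 := by rw [ha]; ring
  refine ⟨?_, ?_, ?_⟩
  · set C := D * Real.exp (c * (|a| ^ 2 / vinf + 2 * |a| ^ 2)) with hC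
    have hmeas : AEStronglyMeasurable
        (fun v : ℝ => D * Real.exp (-c * (a * Real.log v + vinf / v + v)))
        (volume.restrict (Ioi 0)) := by
      apply Measurable.aestronglyMeasurable
      exact measurable_const.mul ((((Real.measurable_log.const_mul a).add
        (measurable_const.div measurable_id)).add measurable_id).const_mul (-c)).exp
    have hint : IntegrableOn (fun v : ℝ => C * Real.exp (-(c / 2) * v)) (Ioi 0) :=
      (exp_neg_integrableOn_Ioi 0 (by positivity)).const_mul C
    apply hint.mono' hmeas
    filter_upwards [ae_restrict_mem measurableSet_Ioi] with v hv
    have hv0 : (0:ℝ) < v := hv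
    have hlb := sd_lower a vinf hvinf hv0
    rw [Real.norm_eq_abs, abs_of_pos (by positivity)]
    have h1 : -c * (a * Real.log v + vinf / v + v)
        ≤ c * (|a| ^ 2 / vinf + 2 * |a| ^ 2) + -(c / 2) * v := by
      nlinarith [mul_le_mul_of_nonneg_left hlb hc0.le]
    calc D * Real.exp (-c * (a * Real.log v + vinf / v + v))
        ≤ D * Real.exp (c * (|a| ^ 2 / vinf + 2 * |a| ^ 2) + -(c / 2) * v) := by
          gcongr
      _ = C * Real.exp (-(c / 2) * v) := by rw [hC, Real.exp_add]; ring
  · intro v hv hlt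
    rw [hstar] at hlt
    have hd := sd_hasDerivAt D c a vinf hv
    rw [hd.deriv]
    have hlt' : 2 * v + a < s := by linarith
    have hpos2 : 0 < s + (2 * v + a) := by nlinarith [hs0, hs2, hv, hvinf]
    have hq : v ^ 2 + a * v - vinf < 0 := by
      nlinarith [mul_pos (show 0 < s - (2 * v + a) by linarith) hpos2]
    have hfac : 0 < -c * ((v ^ 2 + a * v - vinf) / v ^ 2) :=
      mul_pos_of_neg_of_neg (neg_neg_of_pos hc0)
        (div_neg_of_neg_of_pos hq (by positivity))
    exact mul_pos (mul_pos hD (Real.exp_pos _)) hfac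
  · intro v hlt
    rw [hstar] at hlt
    have hsa : a < s := by nlinarith [hs0, hs2, hvinf]
    have hv : 0 < v := by linarith
    have hd := sd_hasDerivAt D c a vinf hv
    rw [hd.deriv]
    have hlt' : s < 2 * v + a := by linarith
    have hq : 0 < v ^ 2 + a * v - vinf := by
      nlinarith [mul_pos (show 0 < 2 * v + a - s by linarith)
        (show 0 < 2 * v + a + s by linarith)]
    have hfac : -c * ((v ^ 2 + a * v - vinf) / v ^ 2) < 0 :=
      mul_neg_of_neg_of_pos (neg_neg_of_pos hc0)
        (div_pos hq (by positivity))
    exact mul_neg_of_pos_of_neg (mul_pos hD (Real.exp_pos _)) hfac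
end
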